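/- arXiv:1110.0870 — 2 statements merged into one kernel-verified Lean document; each statement's English description precedes it below -/
import Mathlib

section
/- For any x > 0 and real n > m > 0, the second-kind Legendre function at imaginary argument satisfies 0 < i·Qₙᵐ(ix)/Q_{n-1}ᵐ(ix) < ((n+m)/n)·(x + sqrt(1 + x² - m²/n²))^{-1} < sqrt((n+m)/(n-m)). -/
open Filter Complex

private lemma hasDerivAt_cim {w : ℝ → ℂ} {w' : ℂ} {x : ℝ} (h : HasDerivAt w w' x) :
    HasDerivAt (fun y => (w y).im) w'.im x := by
  simpa [Function.comp_def] using (Complex.imCLM.hasFDerivAt.comp x h.hasFDerivAt).hasDerivAt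

private lemma hasDerivAt_cre {w : ℝ → ℂ} {w' : ℂ} {x : ℝ} (h : HasDerivAt w w' x) :
    HasDerivAt (fun y => (w y).re) w'.re x := by
  simpa [Function.comp_def] using (Complex.reCLM.hasFDerivAt.comp x h.hasFDerivAt).hasDerivAt

private lemma Dc_ne (x : ℝ) : (1 : ℂ) + (x:ℂ)^2 ≠ 0 := by
  have h : ((1 + x^2 : ℝ) : ℂ) ≠ 0 := by
    exact_mod_cast ne_of_gt (by positivity : (0:ℝ) < 1 + x^2)
  push_cast at h
  exact h

private lemma hw_deriv (m n : ℝ) (f g : ℝ → ℂ) {x : ℝ}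
    (hf : HasDerivAt f (((n:ℂ)*(x:ℂ)*f x + I*((n:ℂ)+(m:ℂ))*g x)/(1+(x:ℂ)^2)) x)
    (hg : HasDerivAt g ((-((n:ℂ)*(x:ℂ))*g x - I*((n:ℂ)-(m:ℂ))*f x)/(1+(x:ℂ)^2)) x) :
    HasDerivAt (fun y => f y * (starRingEnd ℂ) (g y))
      (I * ((((n-m) * normSq (f x) + (n+m) * normSq (g x)) / (1+x^2) : ℝ) : ℂ)) x := by
  have h := hf.mul hg.star
  have hD := Dc_ne x
  refine h.congr_deriv (Eq.symm ?_)
  simp only [RCLike.star_def, map_div₀, map_sub, map_neg, map_mul, map_add, map_one, map_pow,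
    Complex.conj_I, Complex.conj_ofReal]
  push_cast
  rw [← Complex.mul_conj, ← Complex.mul_conj]
  field_simp
  ring

private lemma im_ofReal (z : ℂ) : ((z.im : ℝ) : ℂ) = (z - (starRingEnd ℂ) z) / (2 * I) := by
  rw [Complex.sub_conj]
  push_cast
  field_simp [Complex.I_ne_zero]

private lemma hnf_deriv (m n : ℝ) (f g : ℝ → ℂ) {x : ℝ}
    (hf : HasDerivAt f (((n:ℂ)*(x:ℂ)*f x + I*((n:ℂ)+(m:ℂ))*g x)/(1+(x:ℂ)^2)) x) :
    HasDerivAt (fun y => normSq (f y))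
      ((2*n*x*normSq (f x) + 2*(n+m)*(f x * (starRingEnd ℂ) (g x)).im)/(1+x^2)) x := by
  have hD := Dc_ne x
  set d : ℂ := ((n:ℂ)*(x:ℂ)*f x + I*((n:ℂ)+(m:ℂ))*g x)/(1+(x:ℂ)^2) with hd
  have h2 := hasDerivAt_cre (hf.mul hf.star)
  have e : d * star (f x) + f x * star d
      = (((2*n*x*normSq (f x) + 2*(n+m)*(f x * (starRingEnd ℂ) (g x)).im)/(1+x^2) : ℝ) : ℂ) := by
    rw [hd]
    push_cast
    rw [← Complex.mul_conj, im_ofReal]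
    simp only [RCLike.star_def, map_div₀, map_sub, map_neg, map_mul, map_add, map_one, map_pow,
      Complex.conj_I, Complex.conj_ofReal, Complex.conj_conj]
    field_simp
    ring_nf
    simp only [Complex.I_sq]
    ring
  rw [e, Complex.ofReal_re] at h2
  have hfun : (fun y => (f y * star (f y)).re) = fun y => normSq (f y) :=
    funext fun y => by simp [RCLike.star_def, Complex.mul_conj]
  simp only [Pi.mul_apply] at h2
  rwa [hfun] at h2

private lemma hng_deriv (m n : ℝ) (f g : ℝ → ℂ) {x : ℝ}
    (hg : HasDerivAt g ((-((n:ℂ)*(x:ℂ))*g x - I*((n:ℂ)-(m:ℂ))*f x)/(1+(x:ℂ)^2)) x) :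
    HasDerivAt (fun y => normSq (g y))
      ((-(2*n*x*normSq (g x)) + 2*(n-m)*(f x * (starRingEnd ℂ) (g x)).im)/(1+x^2)) x := by
  have hD := Dc_ne x
  set d : ℂ := (-((n:ℂ)*(x:ℂ))*g x - I*((n:ℂ)-(m:ℂ))*f x)/(1+(x:ℂ)^2) with hd
  have h2 := hasDerivAt_cre (hg.mul hg.star)
  have e : d * star (g x) + g x * star d
      = (((-(2*n*x*normSq (g x)) + 2*(n-m)*(f x * (starRingEnd ℂ) (g x)).im)/(1+x^2) : ℝ) : ℂ) := by
    rw [hd]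
    push_cast
    rw [← Complex.mul_conj, im_ofReal]
    simp only [RCLike.star_def, map_div₀, map_sub, map_neg, map_mul, map_add, map_one, map_pow,
      Complex.conj_I, Complex.conj_ofReal, Complex.conj_conj]
    field_simp
    ring_nf
    simp only [Complex.I_sq]
    ring
  rw [e, Complex.ofReal_re] at h2
  have hfun : (fun y => (g y * star (g y)).re) = fun y => normSq (g y) :=
    funext fun y => by simp [RCLike.star_def, Complex.mul_conj]
  simp only [Pi.mul_apply] at h2
  rwa [hfun] at h2


private lemma gdecay (m n : ℝ) (hm : 0 < m) (hn : m < n) (f g : ℝ → ℂ)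
    (hf : ∀ x : ℝ, 0 < x → HasDerivAt f (((n:ℂ)*(x:ℂ)*f x + I*((n:ℂ)+(m:ℂ))*g x)/(1+(x:ℂ)^2)) x)
    (hg : ∀ x : ℝ, 0 < x →
      HasDerivAt g ((-((n:ℂ)*(x:ℂ))*g x - I*((n:ℂ)-(m:ℂ))*f x)/(1+(x:ℂ)^2)) x)
    (hf0 : Tendsto f atTop (nhds 0)) :
    Tendsto g atTop (nhds 0) := by
  have hnm : 0 < n - m := by linarith
  have hnm' : 0 < n + m := by linarith
  set c : ℝ := (n-m)/(n+m) with hcdef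
  have hcpos : 0 < c := by positivity
  set W : ℝ → ℝ := fun y => normSq (g y) - c * normSq (f y) with hWdef
  have hW' : ∀ y : ℝ, 0 < y → HasDerivAt W
      (-(2*n*y*(normSq (g y) + c * normSq (f y)))/(1+y^2)) y := by
    intro y hy
    have h1 := hnf_deriv m n f g (hf y hy)
    have h2 := hng_deriv m n f g (hg y hy)
    have h4 := h2.sub (h1.const_mul c)
    refine h4.congr_deriv (Eq.symm ?_)
    have h5 : (1:ℝ)+y^2 ≠ 0 := by positivity
    rw [hcdef]
    field_simp
    ring
  have hWanti : AntitoneOn W (Set.Ioi 0) := by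
    apply antitoneOn_of_deriv_nonpos (convex_Ioi 0)
      (fun y hy => ((hW' y hy).continuousAt).continuousWithinAt)
      (fun y hy => by
        rw [interior_Ioi] at hy
        exact ((hW' y hy).differentiableAt).differentiableWithinAt)
    intro y hy
    rw [interior_Ioi] at hy
    rw [(hW' y hy).deriv]
    have h1 : 0 ≤ normSq (g y) + c * normSq (f y) :=
      add_nonneg (Complex.normSq_nonneg _) (mul_nonneg hcpos.le (Complex.normSq_nonneg _))
    have h2 : (0:ℝ) < 1 + y^2 := by positivity
    apply div_nonpos_of_nonpos_of_nonneg _ h2.le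
    have hy0 : (0:ℝ) < y := hy
    have hn0 : (0:ℝ) < n := by linarith
    nlinarith [mul_nonneg (mul_nonneg hn0.le hy0.le) h1]
  clear_value c W
  have hnf0 : Tendsto (fun y => c * normSq (f y)) atTop (nhds 0) := by
    have h := ((Complex.continuous_normSq.tendsto (0:ℂ)).comp hf0).const_mul c
    simpa using h
  -- main smallness claim
  have hsmall : ∀ δ : ℝ, 0 < δ → ∀ᶠ x in atTop, normSq (g x) < δ := by
    intro δ hδ
    have hev : ∀ᶠ y in atTop, c * normSq (f y) < δ/2 := by
      have := Metric.tendsto_atTop.mp hnf0 (δ/2) (by linarith)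
      obtain ⟨N, hN⟩ := this
      filter_upwards [eventually_ge_atTop N] with y hy
      have h := hN y hy
      rw [Real.dist_eq, sub_zero] at h
      exact lt_of_le_of_lt (le_abs_self _) h
    obtain ⟨x₁, hx₁⟩ := (hev.and (eventually_ge_atTop 1)).exists_forall_of_atTop
    have hx₁pos : (0:ℝ) < x₁ := by linarith [(hx₁ x₁ le_rfl).2]
    have hclaim : ∃ x₂, x₁ ≤ x₂ ∧ W x₂ < δ/2 := by
      by_contra hcon
      push_neg at hcon
      set Z : ℝ → ℝ := fun y => W y + (n*δ/2) * Real.log (1+y^2) with hZdef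
      have hZ' : ∀ y : ℝ, 0 < y → HasDerivAt Z
          (-(2*n*y*(normSq (g y) + c * normSq (f y)))/(1+y^2) + (n*δ/2) * (2*y/(1+y^2))) y := by
        intro y hy0
        have hpos : (0:ℝ) < 1 + y^2 := by positivity
        have hin : HasDerivAt (fun y : ℝ => 1+y^2) (2*y) y := by
          simpa using ((hasDerivAt_pow 2 y).const_add 1)
        have hlog : HasDerivAt (fun y : ℝ => Real.log (1+y^2)) (2*y/(1+y^2)) y := by
          have h := (Real.hasDerivAt_log hpos.ne').comp y hin
          simpa [div_eq_inv_mul, mul_comm, Function.comp_def] using h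
        exact (hW' y hy0).add (hlog.const_mul (n*δ/2))
      have hn0 : (0:ℝ) < n := by linarith
      clear_value Z
      have hZanti : AntitoneOn Z (Set.Ici x₁) := by
        apply antitoneOn_of_deriv_nonpos (convex_Ici x₁)
          (fun y hy => ((hZ' y (lt_of_lt_of_le hx₁pos hy)).continuousAt).continuousWithinAt)
          (fun y hy => by
            rw [interior_Ici] at hy
            exact ((hZ' y (lt_trans hx₁pos hy)).differentiableAt).differentiableWithinAt)
        intro y hy
        rw [interior_Ici] at hy
        have hy0 : (0:ℝ) < y := lt_trans hx₁pos hy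
        rw [(hZ' y hy0).deriv]
        have hpos : (0:ℝ) < 1 + y^2 := by positivity
        have hWge : δ/2 ≤ W y := hcon y hy.le
        have hA : δ/2 ≤ normSq (g y) + c * normSq (f y) := by
          have := mul_nonneg hcpos.le (Complex.normSq_nonneg (f y))
          simp only [hWdef] at hWge
          linarith
        have hkey : -(2*n*y*(normSq (g y) + c * normSq (f y)))/(1+y^2)
            + (n*δ/2) * (2*y/(1+y^2))
            = (n*y*(δ - 2*(normSq (g y) + c * normSq (f y))))/(1+y^2) := by
          field_simp
          ring
        rw [hkey]
        apply div_nonpos_of_nonpos_of_nonneg _ hpos.le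
        nlinarith [mul_nonneg hn0.le hy0.le]
      -- contradiction via unboundedness of log
      set K := (Z x₁ - δ/2) / (n*δ/2) with hK
      set X := max x₁ (Real.exp K) with hXd
      have hXx₁ : x₁ ≤ X := le_max_left _ _
      have hX1 : (1:ℝ) ≤ X := le_trans (hx₁ x₁ le_rfl).2 hXx₁
      have hXe : Real.exp K ≤ X := le_max_right _ _
      have hZle : Z X ≤ Z x₁ := hZanti Set.self_mem_Ici (Set.mem_Ici.mpr hXx₁) hXx₁
      have hWX : δ/2 ≤ W X := hcon X hXx₁
      have hZX : δ/2 + (n*δ/2) * Real.log (1+X^2) ≤ Z x₁ := by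
        have hzx : Z X = W X + (n*δ/2) * Real.log (1+X^2) := by rw [hZdef]
        linarith
      have hlog : K < Real.log (1+X^2) := by
        have h2 : Real.exp K < 1 + X^2 := by nlinarith [Real.exp_pos K]
        calc K = Real.log (Real.exp K) := (Real.log_exp K).symm
          _ < Real.log (1+X^2) := Real.log_lt_log (Real.exp_pos K) h2
      have hpos' : (0:ℝ) < n*δ/2 := by positivity
      have hfin : Real.log (1+X^2) ≤ K := by
        rw [hK, le_div_iff₀ hpos']
        linarith
      linarith
    obtain ⟨x₂, hx₂ge, hx₂⟩ := hclaim
    have hx₂pos : (0:ℝ) < x₂ := lt_of_lt_of_le hx₁pos hx₂ge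
    filter_upwards [eventually_ge_atTop x₂] with y hy
    have hyx₁ : x₁ ≤ y := le_trans hx₂ge hy
    have hWle : W y ≤ W x₂ := hWanti hx₂pos (lt_of_lt_of_le hx₂pos hy) hy
    have hfy := (hx₁ y hyx₁).1
    have hgy : normSq (g y) = W y + c * normSq (f y) := by
      simp only [hWdef]; ring
    linarith
  -- conclude
  rw [Metric.tendsto_atTop]
  intro ε hε
  obtain ⟨N, hN⟩ := eventually_atTop.mp (hsmall (ε^2) (by positivity))
  refine ⟨N, fun y hy => ?_⟩
  have h := hN y hy
  rw [dist_eq_norm, sub_zero]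
  have habs : ‖g y‖^2 = normSq (g y) := by
    rw [Complex.sq_norm]
  nlinarith [norm_nonneg (g y)]

private lemma key (m n : ℝ) (hm : 0 < m) (hn : m < n) (f g : ℝ → ℂ)
    (hf : ∀ x : ℝ, 0 < x → HasDerivAt f (((n:ℂ)*(x:ℂ)*f x + I*((n:ℂ)+(m:ℂ))*g x)/(1+(x:ℂ)^2)) x)
    (hg : ∀ x : ℝ, 0 < x →
      HasDerivAt g ((-((n:ℂ)*(x:ℂ))*g x - I*((n:ℂ)-(m:ℂ))*f x)/(1+(x:ℂ)^2)) x)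
    (hf0 : Tendsto f atTop (nhds 0)) (hg0 : Tendsto g atTop (nhds 0))
    (hfne : ∀ x : ℝ, 0 < x → f x ≠ 0) :
    ∀ x : ℝ, 0 < x → (f x * (starRingEnd ℂ) (g x)).re = 0 ∧
      (f x * (starRingEnd ℂ) (g x)).im < 0 ∧
      (n-m) * normSq (f x) - (n+m) * normSq (g x)
        - 2*n*x*(f x * (starRingEnd ℂ) (g x)).im < 0 := by
  have hnm : 0 < n - m := by linarith
  have hnm' : 0 < n + m := by linarith
  set t : ℝ → ℝ := fun y => (f y * (starRingEnd ℂ) (g y)).im with htdef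
  set u : ℝ → ℝ := fun y => (f y * (starRingEnd ℂ) (g y)).re with hudef
  set S : ℝ → ℝ := fun y => (n-m) * normSq (f y) + (n+m) * normSq (g y) with hSdef
  have hSpos : ∀ y : ℝ, 0 < y → 0 < S y := fun y hy => by
    have h1 : 0 < normSq (f y) := Complex.normSq_pos.mpr (hfne y hy)
    have h2 : 0 ≤ normSq (g y) := Complex.normSq_nonneg (g y)
    simp only [hSdef]
    nlinarith
  have hw : ∀ y : ℝ, 0 < y → HasDerivAt (fun z => f z * (starRingEnd ℂ) (g z))
      (I * ((S y / (1+y^2) : ℝ) : ℂ)) y := fun y hy => by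
    simpa [hSdef] using hw_deriv m n f g (hf y hy) (hg y hy)
  have hu' : ∀ y : ℝ, 0 < y → HasDerivAt u 0 y := fun y hy => by
    rw [hudef]
    convert hasDerivAt_cre (hw y hy) using 1
    simp
    norm_cast
  have ht' : ∀ y : ℝ, 0 < y → HasDerivAt t (S y / (1+y^2)) y := fun y hy => by
    rw [htdef]
    convert hasDerivAt_cim (hw y hy) using 1
    simp
    norm_cast
  -- limits
  have hw0 : Tendsto (fun y => f y * (starRingEnd ℂ) (g y)) atTop (nhds 0) := by
    have hconj : Tendsto (fun y => (starRingEnd ℂ) (g y)) atTop (nhds 0) := by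
      simpa [Function.comp_def] using (Complex.continuous_conj.tendsto (0:ℂ)).comp hg0
    simpa using hf0.mul hconj
  have ht0 : Tendsto t atTop (nhds 0) := by
    rw [htdef]
    simpa only [Function.comp_def, Complex.zero_im]
      using (Complex.continuous_im.tendsto (0:ℂ)).comp hw0
  have hu0 : Tendsto u atTop (nhds 0) := by
    rw [hudef]
    simpa only [Function.comp_def, Complex.zero_re]
      using (Complex.continuous_re.tendsto (0:ℂ)).comp hw0
  have hnf0 : Tendsto (fun y => normSq (f y)) atTop (nhds 0) := by
    simpa [Function.comp_def] using (Complex.continuous_normSq.tendsto (0:ℂ)).comp hf0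
  have hng0 : Tendsto (fun y => normSq (g y)) atTop (nhds 0) := by
    simpa [Function.comp_def] using (Complex.continuous_normSq.tendsto (0:ℂ)).comp hg0
  have hS0 : Tendsto S atTop (nhds 0) := by
    have := ((hnf0.const_mul (n-m)).add (hng0.const_mul (n+m)))
    simpa [hSdef] using this
  -- u is identically zero on (0, ∞)
  have hu_eq : ∀ x : ℝ, 0 < x → u x = 0 := by
    have humono : MonotoneOn u (Set.Ioi 0) :=
      monotoneOn_of_deriv_nonneg (convex_Ioi 0)
        (fun y hy => ((hu' y hy).continuousAt).continuousWithinAt)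
        (fun y hy => by
          rw [interior_Ioi] at hy
          exact ((hu' y hy).differentiableAt).differentiableWithinAt)
        (fun y hy => by
          rw [interior_Ioi] at hy
          rw [(hu' y hy).deriv])
    have huanti : AntitoneOn u (Set.Ioi 0) :=
      antitoneOn_of_deriv_nonpos (convex_Ioi 0)
        (fun y hy => ((hu' y hy).continuousAt).continuousWithinAt)
        (fun y hy => by
          rw [interior_Ioi] at hy
          exact ((hu' y hy).differentiableAt).differentiableWithinAt)
        (fun y hy => by
          rw [interior_Ioi] at hy
          rw [(hu' y hy).deriv])
    intro x hx
    have hconst : Tendsto (fun _ : ℝ => u x) atTop (nhds 0) := by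
      apply hu0.congr'
      filter_upwards [eventually_ge_atTop x] with y hy
      have hy0 : (0:ℝ) < y := lt_of_lt_of_le hx hy
      exact le_antisymm (huanti hx hy0 hy) (humono hx hy0 hy)
    exact tendsto_nhds_unique tendsto_const_nhds hconst
  -- t is strictly monotone and negative on (0, ∞)
  have htmono : StrictMonoOn t (Set.Ioi 0) :=
    strictMonoOn_of_deriv_pos (convex_Ioi 0)
      (fun y hy => ((ht' y hy).continuousAt).continuousWithinAt)
      (fun y hy => by
        rw [interior_Ioi] at hy
        have hy0 : (0:ℝ) < y := hy
        rw [(ht' y hy0).deriv]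
        have := hSpos y hy0
        positivity)
  have htle : ∀ x : ℝ, 0 < x → t x ≤ 0 := by
    intro x hx
    refine ge_of_tendsto ht0 ?_
    filter_upwards [eventually_ge_atTop (x+1)] with X hX
    have hX0 : (0:ℝ) < X := by linarith
    exact (htmono hx hX0 (by linarith)).le
  have htneg : ∀ x : ℝ, 0 < x → t x < 0 := fun x hx =>
    lt_of_lt_of_le (htmono hx (by linarith : (0:ℝ) < x+1) (lt_add_one x))
      (htle (x+1) (by linarith))
  -- continuity of S
  have hScont : ∀ y : ℝ, 0 < y → ContinuousAt S y := fun y hy => by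
    have h1 := (hnf_deriv m n f g (hf y hy)).continuousAt
    have h2 := (hng_deriv m n f g (hg y hy)).continuousAt
    rw [hSdef]
    exact (continuousAt_const.mul h1).add (continuousAt_const.mul h2)
  -- x * t x → 0
  have hxt0 : Tendsto (fun x => x * t x) atTop (nhds 0) := by
    rw [Metric.tendsto_atTop]
    intro ε hε
    obtain ⟨x₀, hx₀⟩ := (Metric.tendsto_atTop.mp hS0) (ε/2) (by linarith)
    refine ⟨max x₀ 1, fun x hx => ?_⟩
    have hx1 : (1:ℝ) ≤ x := le_trans (le_max_right _ _) hx
    have hxpos : (0:ℝ) < x := by linarith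
    have hSby : ∀ y : ℝ, x ≤ y → S y ≤ ε/2 := by
      intro y hy
      have h := hx₀ y (le_trans (le_trans (le_max_left _ _) hx) hy)
      rw [Real.dist_eq, sub_zero] at h
      exact (le_abs_self _).trans (le_of_lt h)
    have hbound : ∀ X : ℝ, x ≤ X → t X - t x ≤ ε/2 * (Real.pi/2 - Real.arctan x) := by
      intro X hX
      have hcont : ContinuousOn (fun y => S y / (1+y^2)) (Set.uIcc x X) := by
        intro y hy
        rw [Set.uIcc_of_le hX] at hy
        have hy0 : (0:ℝ) < y := lt_of_lt_of_le hxpos hy.1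
        exact (((hScont y hy0).div (continuousAt_const.add (continuousAt_id.pow 2))
          (by show (1:ℝ) + y^2 ≠ 0; positivity)).continuousWithinAt)
      have hint : IntervalIntegrable (fun y => S y / (1+y^2)) MeasureTheory.volume x X :=
        hcont.intervalIntegrable
      have hFTC : ∫ y in x..X, S y / (1+y^2) = t X - t x := by
        apply intervalIntegral.integral_eq_sub_of_hasDerivAt
        · intro y hy
          rw [Set.uIcc_of_le hX] at hy
          exact ht' y (lt_of_lt_of_le hxpos hy.1)
        · exact hint
      have hint2 : IntervalIntegrable (fun y : ℝ => ε/2 * (1/(1+y^2)))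
          MeasureTheory.volume x X := by
        apply ContinuousOn.intervalIntegrable
        apply Continuous.continuousOn
        exact continuous_const.mul (continuous_const.div
          (continuous_const.add (continuous_pow 2)) fun y => by positivity)
      have hmono : ∫ y in x..X, S y / (1+y^2) ≤ ∫ y in x..X, ε/2 * (1/(1+y^2)) := by
        apply intervalIntegral.integral_mono_on hX hint hint2
        intro y hy
        have hy0 : (0:ℝ) < y := lt_of_lt_of_le hxpos hy.1
        have hSy := hSby y hy.1
        rw [mul_one_div]
        gcongr
      have hrhs : ∫ y in x..X, ε/2 * (1/(1+y^2)) = ε/2 * (Real.arctan X - Real.arctan x) := by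
        rw [intervalIntegral.integral_const_mul, integral_one_div_one_add_sq]
      have harcX := Real.arctan_lt_pi_div_two X
      calc t X - t x = ∫ y in x..X, S y/(1+y^2) := hFTC.symm
        _ ≤ ∫ y in x..X, ε/2 * (1/(1+y^2)) := hmono
        _ = ε/2 * (Real.arctan X - Real.arctan x) := hrhs
        _ ≤ ε/2 * (Real.pi/2 - Real.arctan x) := by nlinarith
    have hlim : -t x ≤ ε/2 * (Real.pi/2 - Real.arctan x) := by
      have h1 : Tendsto (fun X => t X - t x) atTop (nhds (0 - t x)) := ht0.sub_const (t x)
      have h2 := le_of_tendsto h1 (eventually_atTop.mpr ⟨x, hbound⟩)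
      linarith
    have harc : Real.pi/2 - Real.arctan x ≤ x⁻¹ := by
      rw [← Real.arctan_inv_of_pos hxpos]
      have hinv : (0:ℝ) < x⁻¹ := by positivity
      have h1 : (0:ℝ) < Real.arctan x⁻¹ := by
        have h := Real.arctan_strictMono hinv
        rwa [Real.arctan_zero] at h
      have h2 : Real.arctan x⁻¹ < x⁻¹ := by
        conv_rhs => rw [← Real.tan_arctan x⁻¹]
        exact Real.lt_tan h1 (Real.arctan_lt_pi_div_two _)
      exact h2.le
    have htx := htle x hxpos
    have harcx := Real.arctan_lt_pi_div_two x
    have h3 : -t x ≤ ε/2 * x⁻¹ := le_trans hlim (by nlinarith)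
    have h4 : x * (-t x) ≤ x * (ε/2 * x⁻¹) := mul_le_mul_of_nonneg_left h3 hxpos.le
    have h5 : x * (ε/2 * x⁻¹) = ε/2 := by
      field_simp
    rw [Real.dist_eq, sub_zero, abs_of_nonpos (by nlinarith : x * t x ≤ 0)]
    nlinarith
  -- the function F and its derivative
  have hF' : ∀ y : ℝ, 0 < y → HasDerivAt
      (fun z => (n-m) * normSq (f z) - (n+m) * normSq (g z) - 2*n*(z*t z)) (-(2*n*t y)) y := by
    intro y hy
    have h1 := hnf_deriv m n f g (hf y hy)
    have h2 := hng_deriv m n f g (hg y hy)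
    have h3 : HasDerivAt (fun z => z * t z) (1 * t y + y * (S y/(1+y^2))) y :=
      (hasDerivAt_id y).mul (ht' y hy)
    have h4 := ((h1.const_mul (n-m)).sub (h2.const_mul (n+m))).sub (h3.const_mul (2*n))
    refine h4.congr_deriv (Eq.symm ?_)
    have h5 : (1:ℝ)+y^2 ≠ 0 := by positivity
    simp only [htdef, hSdef]
    field_simp
    ring
  set F : ℝ → ℝ := fun z => (n-m) * normSq (f z) - (n+m) * normSq (g z) - 2*n*(z*t z)
    with hFdef
  have hFmono : StrictMonoOn F (Set.Ioi 0) :=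
    strictMonoOn_of_deriv_pos (convex_Ioi 0)
      (fun y hy => ((hF' y hy).continuousAt).continuousWithinAt)
      (fun y hy => by
        rw [interior_Ioi] at hy
        rw [(hF' y hy).deriv]
        have := htneg y hy
        nlinarith)
  have hF0 : Tendsto F atTop (nhds 0) := by
    have h := ((hnf0.const_mul (n-m)).sub (hng0.const_mul (n+m))).sub (hxt0.const_mul (2*n))
    simpa [hFdef] using h
  have hFle : ∀ x : ℝ, 0 < x → F x ≤ 0 := by
    intro x hx
    refine ge_of_tendsto hF0 ?_
    filter_upwards [eventually_ge_atTop (x+1)] with X hX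
    have hX0 : (0:ℝ) < X := by linarith
    exact (hFmono hx hX0 (by linarith)).le
  intro x hx
  refine ⟨hu_eq x hx, htneg x hx, ?_⟩
  have h1 : F x < 0 :=
    lt_of_lt_of_le (hFmono hx (by linarith : (0:ℝ) < x+1) (lt_add_one x))
      (hFle (x+1) (by linarith))
  rw [hFdef] at h1
  simp only [htdef] at h1 ⊢
  ring_nf at h1 ⊢
  exact h1


set_option maxHeartbeats 1000000 in
/-- Let `Q n x` denote the associated Legendre function of
the second kind `Qₙᵐ` evaluated at `ix` (`x > 0`), for real degree `n` and
fixed real order `m > 0`. The family is characterized by the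
difference-differential system (DLMF 14.10.4–5 at imaginary argument)
`(1+x²) (d/dx)Qₙᵐ(ix) = n x Qₙᵐ(ix) + i (n+m) Qₙ₋₁ᵐ(ix)`,
`(1+x²) (d/dx)Qₙ₋₁ᵐ(ix) = -n x Qₙ₋₁ᵐ(ix) - i (n-m) Qₙᵐ(ix)`,
together with being the recessive (decaying, nonvanishing) solution as
`x → +∞`. Then for `n > m` and `x > 0`:
`0 < i Qₙᵐ(ix)/Qₙ₋₁ᵐ(ix) < ((n+m)/n) (x + √(1+x²-m²/n²))⁻¹ < √((n+m)/(n-m))`. -/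
theorem oblate_legendre_Q_ratio_bounds (m : ℝ) (hm : 0 < m) (Q : ℝ → ℝ → ℂ)
    (hsys1 : ∀ n x : ℝ, m < n → 0 < x →
      HasDerivAt (Q n)
        (((n : ℂ) * (x : ℂ) * Q n x + Complex.I * ((n : ℂ) + (m : ℂ)) * Q (n - 1) x) /
          (1 + (x : ℂ) ^ 2)) x)
    (hsys2 : ∀ n x : ℝ, m < n → 0 < x →
      HasDerivAt (Q (n - 1))
        ((-((n : ℂ) * (x : ℂ)) * Q (n - 1) x - Complex.I * ((n : ℂ) - (m : ℂ)) * Q n x) /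
          (1 + (x : ℂ) ^ 2)) x)
    (hdecay : ∀ n : ℝ, m < n → Tendsto (Q n) atTop (nhds 0))
    (hne : ∀ n x : ℝ, m < n → 0 < x → Q n x ≠ 0) :
    ∀ n x : ℝ, m < n → 0 < x →
      ∃ r : ℝ, Complex.I * Q n x / Q (n - 1) x = (r : ℂ) ∧ 0 < r ∧
        r < (n + m) / n * (x + Real.sqrt (1 + x ^ 2 - m ^ 2 / n ^ 2))⁻¹ ∧
        (n + m) / n * (x + Real.sqrt (1 + x ^ 2 - m ^ 2 / n ^ 2))⁻¹ <
          Real.sqrt ((n + m) / (n - m)) := by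
  intro n x hn hx
  have hn0 : 0 < n := lt_trans hm hn
  have hnm : 0 < n - m := by linarith
  have hnm' : 0 < n + m := by linarith
  have hg0 : Tendsto (Q (n-1)) atTop (nhds 0) :=
    gdecay m n hm hn (Q n) (Q (n-1)) (fun y hy => hsys1 n y hn hy)
      (fun y hy => hsys2 n y hn hy) (hdecay n hn)
  obtain ⟨hre, him, hFlt⟩ := key m n hm hn (Q n) (Q (n-1)) (fun y hy => hsys1 n y hn hy)
    (fun y hy => hsys2 n y hn hy) (hdecay n hn) hg0 (fun y hy => hne n y hn hy) x hx
  set a : ℂ := Q n x with ha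
  set b : ℂ := Q (n-1) x with hb
  have hbne : b ≠ 0 := by
    intro h
    rw [h] at him
    simp at him
  set T : ℝ := (a * (starRingEnd ℂ) b).im with hT
  set G : ℝ := normSq b with hG
  have hGpos : 0 < G := Complex.normSq_pos.mpr hbne
  have hTneg : T < 0 := him
  -- a * conj b = T * I
  have hab : a * (starRingEnd ℂ) b = (T:ℂ) * I := by
    apply Complex.ext
    · simpa using hre
    · simp [hT]
  -- normSq a * G = T^2
  have hnaG : normSq a * G = T^2 := by
    have h1 : normSq (a * (starRingEnd ℂ) b) = normSq a * G := by
      rw [map_mul, Complex.normSq_conj]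
    have h2 : normSq ((T:ℂ) * I) = T^2 := by
      simp [Complex.normSq_mul, Complex.normSq_I, Complex.normSq_ofReal]
      ring
    rw [← h1, hab, h2]
  set r : ℝ := -T/G with hr
  have hrpos : 0 < r := by
    rw [hr]
    apply div_pos (by linarith) hGpos
  have hrG : r * G = -T := by rw [hr]; field_simp
  have hr2G : r^2 * G = normSq a := by
    apply mul_right_cancel₀ hGpos.ne'
    calc r^2*G*G = (r*G)^2 := by ring
      _ = (-T)^2 := by rw [hrG]
      _ = T^2 := by ring
      _ = normSq a * G := hnaG.symm
  clear_value a b T G r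
  refine ⟨r, ?_, hrpos, ?_, ?_⟩
  · -- I * a / b = r
    rw [div_eq_iff hbne]
    have hcb : (starRingEnd ℂ) b ≠ 0 := by
      simpa using hbne
    apply mul_right_cancel₀ hcb
    have h1 : I * a * (starRingEnd ℂ) b = I * ((T:ℂ) * I) := by
      rw [mul_assoc, hab]
    have h2 : I * ((T:ℂ) * I) = ((-T : ℝ) : ℂ) := by
      push_cast
      rw [mul_comm I, mul_assoc, Complex.I_mul_I]
      ring
    rw [h1, h2]
    rw [mul_assoc, Complex.mul_conj, ← hG]
    rw [hr]
    have hGC : (G:ℂ) ≠ 0 := by exact_mod_cast hGpos.ne'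
    push_cast
    field_simp
  · -- middle bound
    set s : ℝ := Real.sqrt (1 + x^2 - m^2/n^2) with hs
    have harg : 0 < 1 + x^2 - m^2/n^2 := by
      have h1 : m^2/n^2 < 1 := by
        rw [div_lt_one (by positivity)]
        nlinarith
      nlinarith [sq_nonneg x]
    have hspos : 0 < s := Real.sqrt_pos.mpr harg
    have hs2 : s^2 = 1 + x^2 - m^2/n^2 := Real.sq_sqrt harg.le
    -- quadratic inequality for r
    have hquad : (n-m)*r^2 + 2*n*x*r - (n+m) < 0 := by
      have h1 : ((n-m)*r^2 + 2*n*x*r - (n+m)) * G < 0 := by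
        have e1 : ((n-m)*r^2 + 2*n*x*r - (n+m)) * G
            = (n-m)*(r^2*G) + 2*n*x*(r*G) - (n+m)*G := by ring
        rw [e1, hr2G, hrG]
        calc (n-m)*normSq a + 2*n*x*(-T) - (n+m)*G
            = (n-m)*normSq a - (n+m)*G - 2*n*x*T := by ring
          _ < 0 := hFlt
      nlinarith [hGpos]
    set B : ℝ := (n+m)/n * (x+s)⁻¹ with hB
    have hxs : 0 < x + s := by linarith
    have hBpos : 0 < B := by rw [hB]; positivity
    have hn2s2 : n^2*s^2 = n^2 + n^2*x^2 - m^2 := by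
      rw [hs2]
      field_simp
    clear_value s B
    have hBxs : B * (n*(x+s)) = (n+m) := by
      rw [hB]
      field_simp
    have hBzero : (n-m)*B^2 + 2*n*x*B - (n+m) = 0 := by
      have h2 : ((n-m)*B^2 + 2*n*x*B - (n+m)) * (n*(x+s))^2 = 0 := by
        have e : ((n-m)*B^2 + 2*n*x*B - (n+m)) * (n*(x+s))^2
            = (n-m)*(B*(n*(x+s)))^2 + 2*n*x*(B*(n*(x+s)))*(n*(x+s)) - (n+m)*(n*(x+s))^2 := by
          ring
        rw [e, hBxs]
        linear_combination (-(n+m)) * hn2s2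
      have hne2 : (n*(x+s))^2 ≠ 0 := by positivity
      exact (mul_eq_zero.mp h2).resolve_right hne2
    by_contra hle
    push_neg at hle  -- B ≤ r
    have h1 : 0 ≤ (r - B) * ((n-m)*(r+B) + 2*n*x) :=
      mul_nonneg (by linarith) (by nlinarith)
    nlinarith [hquad, hBzero]
  · -- outer bound
    set s : ℝ := Real.sqrt (1 + x^2 - m^2/n^2) with hs
    have harg : 0 < 1 + x^2 - m^2/n^2 := by
      have h1 : m^2/n^2 < 1 := by
        rw [div_lt_one (by positivity)]
        nlinarith
      nlinarith [sq_nonneg x]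
    have hspos : 0 < s := Real.sqrt_pos.mpr harg
    have hs2 : s^2 = 1 + x^2 - m^2/n^2 := Real.sq_sqrt harg.le
    set s0 : ℝ := Real.sqrt (n^2 - m^2) with hs0d
    have hs0pos : 0 < s0 := Real.sqrt_pos.mpr (by nlinarith)
    have hs02 : s0^2 = n^2 - m^2 := Real.sq_sqrt (by nlinarith)
    clear_value s0
    have hrhs : Real.sqrt ((n+m)/(n-m)) = (n+m)/s0 := by
      have h1 : (n+m)/(n-m) = ((n+m)/s0)^2 := by
        rw [div_pow, hs02]
        rw [div_eq_div_iff (by linarith) (by nlinarith)]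
        ring
      rw [h1, Real.sqrt_sq (by positivity)]
    rw [hrhs]
    have hkey : s0 < n*(x+s) := by
      have h1 : s0^2 < (n*(x+s))^2 := by
        have e1 : (n*(x+s))^2 = n^2*x^2 + 2*n^2*x*s + n^2*s^2 := by ring
        have e2 : n^2*s^2 = n^2 + n^2*x^2 - m^2 := by
          have := hs2
          field_simp at this ⊢
          nlinarith [this]
        nlinarith [mul_pos (mul_pos (mul_pos two_pos (mul_pos hn0 hn0)) hx) hspos]
      have h2 : 0 ≤ n*(x+s) := by positivity
      exact lt_of_pow_lt_pow_left₀ 2 h2 h1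
    have e3 : (n+m)/n * (x+s)⁻¹ = (n+m)/(n*(x+s)) := by
      field_simp
    rw [e3]
    exact div_lt_div_of_pos_left hnm' hs0pos hkey
end

section
/- For any α > 0, ν > -1 and x > 0, the Laguerre functions at negative argument satisfy 0 < L_{ν+1}^{α-1}(-x)/L_ν^{α}(-x) < (α + x + sqrt((α+x)² + 4(ν+1)x))/(2(ν+1)). -/
open Finset Real Filter
/-- The generalized Laguerre function `L_ν^{(α)}(x)` for real `ν, α`, defined
through the (entire, reciprocal-Gamma regularized) Kummer series
`L_ν^{(α)}(x) = (Γ(ν+α+1)/Γ(ν+1)) Σ_k (-ν)_k x^k / (Γ(α+1+k) k!)`,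
which for nonnegative integer `ν` is the Laguerre polynomial `L_n^{(α)}`. -/
noncomputable def lagL (ν α x : ℝ) : ℝ :=
  (Real.Gamma (ν + α + 1) / Real.Gamma (ν + 1)) *
    ∑' k : ℕ, (∏ j ∈ Finset.range k, ((j : ℝ) - ν)) * x ^ k /
      (Real.Gamma (α + 1 + k) * (Nat.factorial k : ℝ))

namespace LagAux

lemma gamma_prod (c : ℝ) (hc : 0 < c) (k : ℕ) :
    Real.Gamma (c + k) = Real.Gamma c * ∏ m ∈ Finset.range k, (c + m) := by
  induction k with
  | zero => simp
  | succ k ih =>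
      have h : c + ((k : ℕ) + 1 : ℕ) = (c + k) + 1 := by push_cast; ring
      have hne : c + (k : ℝ) ≠ 0 := by positivity
      rw [h, Real.Gamma_add_one hne, ih, Finset.prod_range_succ]
      ring

lemma shift_prod (c : ℝ) (i : ℕ) :
    (∏ m ∈ Finset.range i, (c + m)) * (c + i) = c * ∏ m ∈ Finset.range i, (c + 1 + m) := by
  have h1 := Finset.prod_range_succ (fun m : ℕ => c + m) i
  have h2 := Finset.prod_range_succ' (fun m : ℕ => c + m) i
  rw [h1] at h2
  rw [h2]
  have : ∀ m ∈ Finset.range i, c + ((m : ℕ) + 1 : ℕ) = c + 1 + m := by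
    intro m _; push_cast; ring
  rw [Finset.prod_congr rfl this]
  push_cast; ring

lemma vand (b : ℝ) : ∀ (k : ℕ) (a : ℝ),
    ∑ p ∈ Finset.HasAntidiagonal.antidiagonal k,
      ((-1:ℝ)^p.1 * (k.choose p.2) * (∏ m ∈ Finset.range p.2, (b + m)) *
        ∏ m ∈ Finset.range p.1, (a + p.2 + m))
      = ∏ j ∈ Finset.range k, (b - a - j) := by
  intro k
  induction k with
  | zero => intro a; simp
  | succ k ih =>
      intro a
      have hS1 : ∑ p ∈ Finset.HasAntidiagonal.antidiagonal (k+1),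
          ((-1:ℝ)^p.1 * (k.choose p.2) * (∏ m ∈ Finset.range p.2, (b + m)) *
            ∏ m ∈ Finset.range p.1, (a + p.2 + m))
          = ∑ p ∈ Finset.HasAntidiagonal.antidiagonal k,
            (-((-1:ℝ)^p.1) * (k.choose p.2) * (∏ m ∈ Finset.range p.2, (b + m)) *
              ((∏ m ∈ Finset.range p.1, (a + p.2 + m)) * (a + p.2 + p.1))) := by
        rw [Finset.Nat.sum_antidiagonal_succ]
        simp only [Nat.choose_succ_self, Nat.cast_zero, pow_zero, zero_mul, mul_zero,
          one_mul, zero_add]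
        apply Finset.sum_congr rfl
        intro p _
        rw [Finset.prod_range_succ, pow_succ]
        ring
      have hmain : ∑ p ∈ Finset.HasAntidiagonal.antidiagonal (k+1),
          ((-1:ℝ)^p.1 * ((k+1).choose p.2) * (∏ m ∈ Finset.range p.2, (b + m)) *
            ∏ m ∈ Finset.range p.1, (a + p.2 + m))
          = (∑ p ∈ Finset.HasAntidiagonal.antidiagonal (k+1),
              ((-1:ℝ)^p.1 * (k.choose p.2) * (∏ m ∈ Finset.range p.2, (b + m)) *
                ∏ m ∈ Finset.range p.1, (a + p.2 + m)))
            + ∑ p ∈ Finset.HasAntidiagonal.antidiagonal k,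
              ((-1:ℝ)^p.1 * (k.choose p.2) * ((∏ m ∈ Finset.range p.2, (b + m)) * (b + p.2)) *
                ∏ m ∈ Finset.range p.1, (a + 1 + p.2 + m)) := by
        rw [Finset.Nat.sum_antidiagonal_succ' (f := fun p =>
          ((-1:ℝ)^p.1 * ((k+1).choose p.2) * (∏ m ∈ Finset.range p.2, (b + m)) *
            ∏ m ∈ Finset.range p.1, (a + p.2 + m))),
          Finset.Nat.sum_antidiagonal_succ' (f := fun p =>
          ((-1:ℝ)^p.1 * (k.choose p.2) * (∏ m ∈ Finset.range p.2, (b + m)) *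
            ∏ m ∈ Finset.range p.1, (a + p.2 + m)))]
        simp only [Nat.choose_zero_right]
        rw [add_assoc, ← Finset.sum_add_distrib]
        congr 1
        apply Finset.sum_congr rfl
        intro p _
        have hc : ((k+1).choose (p.2+1) : ℝ) = (k.choose p.2 : ℝ) + (k.choose (p.2+1) : ℝ) := by
          rw [Nat.choose_succ_succ]; push_cast; ring
        have hB : (∏ m ∈ Finset.range (p.2+1), (b + m)) =
            (∏ m ∈ Finset.range p.2, (b + m)) * (b + p.2) := Finset.prod_range_succ _ _
        have hA : ∀ m ∈ Finset.range p.1, a + ((p.2 : ℕ) + 1 : ℕ) + (m:ℝ) = a + 1 + p.2 + m := by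
          intro m _; push_cast; ring
        rw [Finset.prod_congr rfl hA] at *
        rw [hc, hB]
        ring
      rw [hmain, hS1, ← Finset.sum_add_distrib]
      have : ∀ p ∈ Finset.HasAntidiagonal.antidiagonal k,
          (-((-1:ℝ)^p.1) * (k.choose p.2) * (∏ m ∈ Finset.range p.2, (b + m)) *
              ((∏ m ∈ Finset.range p.1, (a + p.2 + m)) * (a + p.2 + p.1)))
          + ((-1:ℝ)^p.1 * (k.choose p.2) * ((∏ m ∈ Finset.range p.2, (b + m)) * (b + p.2)) *
                ∏ m ∈ Finset.range p.1, (a + 1 + p.2 + m))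
          = (b - a) * ((-1:ℝ)^p.1 * (k.choose p.2) * (∏ m ∈ Finset.range p.2, (b + m)) *
                ∏ m ∈ Finset.range p.1, ((a+1) + p.2 + m)) := by
        intro p _
        have hs := shift_prod (a + p.2) p.1
        have hre : ∀ m ∈ Finset.range p.1, a + (p.2:ℝ) + 1 + m = a + 1 + p.2 + m := by
          intro m _; ring
        rw [Finset.prod_congr rfl hre] at hs
        have hre2 : ∀ m ∈ Finset.range p.1, (a+1) + (p.2:ℝ) + m = a + 1 + p.2 + m := by
          intro m _; ring
        rw [Finset.prod_congr rfl hre2]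
        linear_combination (-((-1:ℝ)^p.1 * ((k.choose p.2 : ℕ) : ℝ) *
          ∏ m ∈ Finset.range p.2, (b + (m:ℝ)))) * hs
      rw [Finset.sum_congr rfl this, ← Finset.mul_sum, ih (a+1)]
      have h1 := Finset.prod_range_succ' (fun j : ℕ => b - a - j) k
      rw [h1]
      have : ∀ j ∈ Finset.range k, b - (a+1) - (j:ℝ) = b - a - ((j:ℕ)+1:ℕ) := by
        intro j _; push_cast; ring
      rw [Finset.prod_congr rfl this]
      push_cast
      ring


lemma summable_helper (f : ℕ → ℝ) (C : ℝ)
    (h : ∀ k : ℕ, |f (k + 1)| ≤ C / (k + 1) * |f k|) : Summable f := by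
  apply summable_of_ratio_norm_eventually_le (r := 1/2) (by norm_num)
  filter_upwards [Filter.eventually_ge_atTop (⌈2 * C⌉₊)] with k hk
  have hk1 : (0:ℝ) < (k:ℝ) + 1 := by positivity
  have h2C : 2 * C ≤ (k : ℝ) + 1 := by
    calc 2 * C ≤ (⌈2*C⌉₊ : ℝ) := Nat.le_ceil _
    _ ≤ (k : ℝ) := by exact_mod_cast hk
    _ ≤ (k : ℝ) + 1 := by linarith
  have hC : C / ((k:ℝ) + 1) ≤ 1/2 := by
    rw [div_le_iff₀ hk1]; linarith
  calc ‖f (k+1)‖ = |f (k+1)| := rfl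
    _ ≤ C / (k+1) * |f k| := h k
    _ ≤ 1/2 * |f k| := mul_le_mul_of_nonneg_right hC (abs_nonneg _)
    _ = 1/2 * ‖f k‖ := rfl

lemma ratio_aux (d z : ℝ) (hd : 0 < d) (k : ℕ) :
    |z| + (k:ℝ) ≤ (d + k) * ((|z| + d) / d) := by
  rw [← mul_div_assoc, le_div_iff₀ hd]
  nlinarith [abs_nonneg z, Nat.cast_nonneg (α := ℝ) k]

noncomputable def gc (c d : ℝ) (k : ℕ) : ℝ :=
  Real.Gamma (c + k) / (Real.Gamma (d + k) * (k.factorial : ℝ))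

lemma gc_pos {c d : ℝ} (hc : 0 < c) (hd : 0 < d) (k : ℕ) : 0 < gc c d k := by
  have h1 : 0 < Real.Gamma (c + k) := Real.Gamma_pos_of_pos (by positivity)
  have h2 : 0 < Real.Gamma (d + k) := Real.Gamma_pos_of_pos (by positivity)
  have h3 : 0 < (k.factorial : ℝ) := by exact_mod_cast k.factorial_pos
  exact div_pos h1 (by positivity)

lemma gc_succ {c d : ℝ} (hc : 0 < c) (hd : 0 < d) (k : ℕ) :
    gc c d (k+1) = gc c d k * ((c + k) / ((d + k) * (k + 1))) := by
  unfold gc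
  have e1 : c + ((k:ℕ) + 1 : ℕ) = (c + k) + 1 := by push_cast; ring
  have e2 : d + ((k:ℕ) + 1 : ℕ) = (d + k) + 1 := by push_cast; ring
  rw [e1, e2, Real.Gamma_add_one (by positivity : c + (k:ℝ) ≠ 0),
    Real.Gamma_add_one (by positivity : d + (k:ℝ) ≠ 0), Nat.factorial_succ]
  have h2 : 0 < Real.Gamma (d + k) := Real.Gamma_pos_of_pos (by positivity)
  have h3 : 0 < (k.factorial : ℝ) := by exact_mod_cast k.factorial_pos
  have hck : (0:ℝ) < d + k := by positivity
  have hk1 : (0:ℝ) < (k:ℝ) + 1 := by positivity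
  field_simp
  push_cast
  ring

lemma summable_gc_pow {c d : ℝ} (hc : 0 < c) (hd : 0 < d) (X : ℝ) :
    Summable (fun k => gc c d k * X^k) := by
  apply summable_helper _ ((c + d)/d * |X|)
  intro k
  have hgpos := gc_pos hc hd k
  have hck : (0:ℝ) < d + k := by positivity
  have hk1 : (0:ℝ) < (k:ℝ) + 1 := by positivity
  rw [gc_succ hc hd]
  have hb : c + (k:ℝ) ≤ (d + k) * ((c + d)/d) := by
    have := ratio_aux d c hd k
    rw [abs_of_pos hc] at this; linarith [this]
  have hXk : |X^(k+1)| = |X| * |X^k| := by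
    rw [pow_succ, abs_mul]; ring
  have h1 : |gc c d k * ((c + k) / ((d + k) * (k + 1))) * X ^ (k+1)|
      = gc c d k * ((c + k) / ((d + k) * (k + 1))) * (|X| * |X^k|) := by
    rw [abs_mul, abs_mul, abs_of_pos hgpos, hXk,
      abs_of_pos (by positivity : (0:ℝ) < (c + k) / ((d + k) * (k + 1)))]
  rw [h1, abs_mul, abs_of_pos hgpos]
  have hdk : (d + (k:ℝ)) ≠ 0 := ne_of_gt hck
  have hk1' : ((k:ℝ) + 1) ≠ 0 := ne_of_gt hk1
  calc gc c d k * ((c + ↑k) / ((d + ↑k) * (↑k + 1))) * (|X| * |X ^ k|)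
      ≤ gc c d k * (((d + ↑k) * ((c + d)/d)) / ((d + ↑k) * (↑k + 1))) * (|X| * |X ^ k|) := by
        gcongr
    _ = (c + d)/d * |X| / (↑k + 1) * (gc c d k * |X ^ k|) := by
        field_simp


lemma gc_quot_bound {c d : ℝ} (hc : 0 < c) (hd : 0 < d) (K : ℝ) (hK : 0 ≤ K) :
    (c + K) / ((d + K) * (K + 1)) ≤ ((c + d)/d) / (K + 1) := by
  have hdK : (0:ℝ) < d + K := by linarith
  have hK1 : (0:ℝ) < K + 1 := by linarith
  rw [← div_div]
  have h2 : (c+K)/(d+K) ≤ (c+d)/d := by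
    rw [div_le_div_iff₀ hdK hd]; nlinarith
  exact div_le_div_of_nonneg_right h2 hK1.le

lemma summable_gc_deriv {c d : ℝ} (hc : 0 < c) (hd : 0 < d) (X : ℝ) :
    Summable (fun k => gc c d k * ((k:ℝ) * X^(k-1))) := by
  apply (summable_nat_add_iff 1).mp
  have hsh : ∀ n : ℕ, gc c d (n+1) * (((n+1 : ℕ):ℝ) * X^((n+1)-1))
      = gc c d (n+1) * (((n:ℝ)+1) * X^n) := by
    intro n; norm_num
  rw [show (fun n : ℕ => gc c d (n+1) * (((n+1 : ℕ):ℝ) * X^((n+1)-1)))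
      = (fun n : ℕ => gc c d (n+1) * (((n:ℝ)+1) * X^n)) from funext hsh]
  apply summable_helper _ ((c + d)/d * |X| * 2)
  intro k
  have h1 : 0 < gc c d (k+1) := gc_pos hc hd (k+1)
  have hk1 : (0:ℝ) < (k:ℝ) + 1 := by positivity
  have hgs := gc_succ hc hd (k+1)
  push_cast at hgs
  rw [hgs]
  push_cast
  have ha1 : |(c + ((k:ℝ)+1)) / ((d + ((k:ℝ)+1)) * ((k:ℝ)+1+1))|
      = (c + ((k:ℝ)+1)) / ((d + ((k:ℝ)+1)) * ((k:ℝ)+1+1)) := abs_of_pos (by positivity)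
  have ha2 : |(k:ℝ)+1+1| = (k:ℝ)+1+1 := abs_of_pos (by positivity)
  have ha3 : |(k:ℝ)+1| = (k:ℝ)+1 := abs_of_pos hk1
  simp only [abs_mul, abs_pow, ha1, ha2, ha3, abs_of_pos h1, pow_succ]
  have hq := gc_quot_bound hc hd ((k:ℝ)+1) (by positivity)
  calc gc c d (k+1) * ((c + ((k:ℝ)+1)) / ((d + ((k:ℝ)+1)) * ((k:ℝ)+1+1))) * (((k:ℝ)+1+1) * (|X|^k * |X|))
      ≤ gc c d (k+1) * (((c + d)/d) / (((k:ℝ)+1) + 1)) * (((k:ℝ)+1+1) * (|X|^k * |X|)) := by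
        gcongr
    _ = (c + d)/d * |X| * 2 / ((k:ℝ)+1) * (gc c d (k+1) * (((k:ℝ)+1) * |X|^k)) / 2 := by
        field_simp
    _ ≤ (c + d)/d * |X| * 2 / ((k:ℝ)+1) * (gc c d (k+1) * (((k:ℝ)+1) * |X|^k)) := by
        have : (0:ℝ) ≤ (c + d)/d * |X| * 2 / ((k:ℝ)+1) * (gc c d (k+1) * (((k:ℝ)+1) * |X|^k)) := by positivity
        linarith

lemma summable_gc_bound {c d : ℝ} (hc : 0 < c) (hd : 0 < d) (R : ℝ) (hR : 0 ≤ R) :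
    Summable (fun k => gc c d k * (((k:ℝ)+1) * R^k)) := by
  apply summable_helper _ ((c + d)/d * R * 2)
  intro k
  have h1 : 0 < gc c d k := gc_pos hc hd k
  have hk1 : (0:ℝ) < (k:ℝ) + 1 := by positivity
  have hgs := gc_succ hc hd k
  rw [hgs]
  push_cast
  have ha1 : |(c + (k:ℝ)) / ((d + (k:ℝ)) * ((k:ℝ)+1))|
      = (c + (k:ℝ)) / ((d + (k:ℝ)) * ((k:ℝ)+1)) := abs_of_pos (by positivity)
  have ha2 : |(k:ℝ)+1+1| = (k:ℝ)+1+1 := abs_of_pos (by positivity)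
  have ha3 : |(k:ℝ)+1| = (k:ℝ)+1 := abs_of_pos hk1
  have haR : |R| = R := abs_of_nonneg hR
  simp only [abs_mul, abs_pow, ha1, ha2, ha3, haR, abs_of_pos h1, pow_succ]
  have hq := gc_quot_bound hc hd (k:ℝ) (by positivity)
  calc gc c d k * ((c + (k:ℝ)) / ((d + (k:ℝ)) * ((k:ℝ)+1))) * (((k:ℝ)+1+1) * (R^k * R))
      ≤ gc c d k * (((c + d)/d) / ((k:ℝ)+1)) * (((k:ℝ)+1+1) * (R^k * R)) := by gcongr
    _ ≤ gc c d k * (((c + d)/d) / ((k:ℝ)+1)) * ((2*((k:ℝ)+1)) * (R^k * R)) := by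
        have h2 : ((k:ℝ)+1+1) ≤ 2*((k:ℝ)+1) := by linarith
        gcongr
    _ = (c + d)/d * R * 2 / ((k:ℝ)+1) * (gc c d k * (((k:ℝ)+1) * R^k)) := by
        field_simp


lemma hasDerivAt_gc_sum {c d : ℝ} (hc : 0 < c) (hd : 0 < d) (t : ℝ) :
    HasDerivAt (fun y => ∑' k, gc c d k * y^k)
      (∑' k, gc c d k * ((k:ℝ) * t^(k-1))) t := by
  set R := |t| + 1 with hR
  have hR1 : (1:ℝ) ≤ R := by simp [hR]
  have hR0 : (0:ℝ) ≤ R := by linarith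
  have hmem : t ∈ Metric.ball (0:ℝ) R := by
    rw [Metric.mem_ball, Real.dist_eq, sub_zero, hR]; linarith
  have hg : ∀ (n : ℕ) (y : ℝ), y ∈ Metric.ball (0:ℝ) R →
      HasDerivAt (fun z => gc c d n * z^n) (gc c d n * ((n:ℝ) * y^(n-1))) y :=
    fun n y _ => (hasDerivAt_pow n y).const_mul (gc c d n)
  have hg' : ∀ (n : ℕ) (y : ℝ), y ∈ Metric.ball (0:ℝ) R →
      ‖gc c d n * ((n:ℝ) * y^(n-1))‖ ≤ gc c d n * (((n:ℝ)+1) * R^n) := by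
    intro n y hy
    rw [Metric.mem_ball, Real.dist_eq, sub_zero] at hy
    have hgn := gc_pos hc hd n
    rw [Real.norm_eq_abs, abs_mul, abs_of_pos hgn, abs_mul, abs_pow,
      abs_of_nonneg (Nat.cast_nonneg n)]
    apply mul_le_mul_of_nonneg_left ?_ hgn.le
    have h1 : |y|^(n-1) ≤ R^(n-1) := pow_le_pow_left₀ (abs_nonneg y) hy.le _
    have h2 : R^(n-1) ≤ R^n := pow_le_pow_right₀ hR1 (Nat.sub_le n 1)
    calc (n:ℝ) * |y|^(n-1) ≤ (n:ℝ) * R^n :=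
          mul_le_mul_of_nonneg_left (h1.trans h2) (Nat.cast_nonneg n)
      _ ≤ ((n:ℝ)+1) * R^n := by
          have h3 : (0:ℝ) ≤ R^n := pow_nonneg hR0 n
          nlinarith
  exact hasDerivAt_tsum_of_isPreconnected (summable_gc_bound hc hd R hR0)
    Metric.isOpen_ball ((convex_ball (0:ℝ) R).isPreconnected)
    hg hg' hmem (summable_gc_pow hc hd t) hmem


lemma coeff_identity (μ δ x : ℝ) (hδ1 : 0 < δ + 1) (n : ℕ) :
    ∑ p ∈ Finset.HasAntidiagonal.antidiagonal n, ((-x)^p.1 / (p.1.factorial : ℝ)) *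
      ((∏ m ∈ Finset.range p.2, (μ+δ+1+m)) * x^p.2 / (Real.Gamma (δ+1+p.2) * p.2.factorial))
    = (∏ j ∈ Finset.range n, (μ - j)) * x^n / (Real.Gamma (δ+1+n) * n.factorial) := by
  have hv := vand (μ+δ+1) n (δ+1)
  have hrw : ∀ j ∈ Finset.range n, (μ+δ+1-(δ+1)-(j:ℝ)) = μ - j := by
    intro j _; ring
  rw [Finset.prod_congr rfl hrw] at hv
  rw [← hv, Finset.sum_mul, Finset.sum_div]
  apply Finset.sum_congr rfl
  intro p hp
  obtain ⟨i, j⟩ := p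
  have hn : i + j = n := Finset.HasAntidiagonal.mem_antidiagonal.mp hp
  subst hn
  simp only
  have hg : Real.Gamma (δ+1+((i+j:ℕ):ℝ))
      = Real.Gamma (δ+1+(j:ℝ)) * ∏ m ∈ Finset.range i, (δ+1+(j:ℝ)+m) := by
    have h := gamma_prod (δ+1+(j:ℝ)) (by positivity) i
    rw [show δ+1+(j:ℝ)+(i:ℝ) = δ+1+((i+j:ℕ):ℝ) by push_cast; ring] at h
    exact h
  have hf : (((i+j).factorial : ℕ) : ℝ)
      = (((i+j).choose j : ℕ) : ℝ) * (i.factorial : ℝ) * (j.factorial : ℝ) := by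
    have h := Nat.add_choose_mul_factorial_mul_factorial i j
    exact_mod_cast h.symm
  have hx : (-x)^i * x^j = (-1:ℝ)^i * x^(i+j) := by
    rw [neg_pow, pow_add]; ring
  have h1 : Real.Gamma (δ+1+(j:ℝ)) ≠ 0 :=
    ne_of_gt (Real.Gamma_pos_of_pos (by positivity))
  have h2 : (0:ℝ) < ∏ m ∈ Finset.range i, (δ+1+(j:ℝ)+m) :=
    Finset.prod_pos (fun m _ => by positivity)
  have h3 : (0:ℝ) < (i.factorial : ℝ) := by exact_mod_cast i.factorial_pos
  have h4 : (0:ℝ) < (j.factorial : ℝ) := by exact_mod_cast j.factorial_pos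
  have h5 : (0:ℝ) < (((i+j).choose j : ℕ) : ℝ) := by
    exact_mod_cast Nat.choose_pos (Nat.le_add_left j i)
  rw [hg, hf]
  rw [div_mul_div_comm, div_eq_div_iff (by positivity) (by positivity)]
  rw [neg_pow, pow_add]
  push_cast
  ring

lemma summable_facpow (x : ℝ) : Summable (fun m : ℕ => |(-x)^m / (m.factorial : ℝ)|) := by
  have h := Real.summable_pow_div_factorial |x|
  apply h.congr
  intro m
  rw [abs_div, abs_pow, abs_neg, abs_of_pos (by exact_mod_cast m.factorial_pos :
    (0:ℝ) < (m.factorial : ℝ))]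

lemma summable_poch_abs (σ δ x : ℝ) (hδ1 : 0 < δ + 1) :
    Summable (fun k : ℕ => |(∏ m ∈ Finset.range k, (σ+m)) * x^k /
      (Real.Gamma (δ+1+k) * (k.factorial : ℝ))|) := by
  apply summable_helper _ ((|σ| + (δ+1))/(δ+1) * |x|)
  intro k
  rw [abs_abs, abs_abs]
  have hb : |σ + (k:ℝ)| ≤ (δ+1+(k:ℝ)) * ((|σ| + (δ+1))/(δ+1)) := by
    calc |σ + (k:ℝ)| ≤ |σ| + (k:ℝ) := by
          have := abs_add_le σ ((k:ℝ))
          simp only [Nat.abs_cast] at this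
          exact this
      _ ≤ ((δ+1) + (k:ℝ)) * ((|σ| + (δ+1))/(δ+1)) := ratio_aux (δ+1) σ hδ1 k
      _ = (δ+1+(k:ℝ)) * ((|σ| + (δ+1))/(δ+1)) := by ring
  have hgam : Real.Gamma (δ+1+((k+1:ℕ):ℝ)) = (δ+1+(k:ℝ)) * Real.Gamma (δ+1+(k:ℝ)) := by
    rw [show δ+1+((k+1:ℕ):ℝ) = (δ+1+(k:ℝ)) + 1 by push_cast; ring]
    exact Real.Gamma_add_one (by positivity)
  have hgp : (0:ℝ) < Real.Gamma (δ+1+(k:ℝ)) := Real.Gamma_pos_of_pos (by positivity)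
  have hdk : (0:ℝ) < δ+1+(k:ℝ) := by positivity
  have hk1 : (0:ℝ) < (k:ℝ)+1 := by positivity
  have hprod : (∏ m ∈ Finset.range (k+1), (σ+(m:ℝ))) = (∏ m ∈ Finset.range k, (σ+(m:ℝ))) * (σ + k) :=
    Finset.prod_range_succ _ _
  rw [hprod, hgam]
  have e1 : |(∏ m ∈ Finset.range k, (σ+(m:ℝ))) * (σ + (k:ℝ)) * x^(k+1) /
      ((δ+1+(k:ℝ)) * Real.Gamma (δ+1+(k:ℝ)) * ((k+1:ℕ).factorial : ℝ))|
      = |∏ m ∈ Finset.range k, (σ+(m:ℝ))| * |σ + (k:ℝ)| * (|x|^k * |x|) /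
        ((δ+1+(k:ℝ)) * Real.Gamma (δ+1+(k:ℝ)) * (((k:ℝ)+1) * (k.factorial : ℝ))) := by
    rw [abs_div, abs_mul, abs_mul, abs_pow, pow_succ]
    rw [abs_of_pos (show (0:ℝ) < (δ+1+(k:ℝ)) * Real.Gamma (δ+1+(k:ℝ)) * ((k+1:ℕ).factorial : ℝ) by
      have : (0:ℝ) < ((k+1:ℕ).factorial : ℝ) := by exact_mod_cast (k+1).factorial_pos
      positivity)]
    rw [Nat.factorial_succ]
    push_cast
    ring_nf
  have hfk : (0:ℝ) < (k.factorial : ℝ) := by exact_mod_cast k.factorial_pos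
  rw [e1, abs_div, abs_mul, abs_mul, abs_pow, abs_of_pos hgp, abs_of_pos hfk]
  set B := |∏ m ∈ Finset.range k, (σ+(m:ℝ))| * |x|^k with hB
  have hB0 : 0 ≤ B := by positivity
  calc |∏ m ∈ Finset.range k, (σ+(m:ℝ))| * |σ + (k:ℝ)| * (|x|^k * |x|) /
        ((δ+1+(k:ℝ)) * Real.Gamma (δ+1+(k:ℝ)) * (((k:ℝ)+1) * (k.factorial : ℝ)))
      ≤ |∏ m ∈ Finset.range k, (σ+(m:ℝ))| * ((δ+1+(k:ℝ)) * ((|σ| + (δ+1))/(δ+1))) * (|x|^k * |x|) /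
        ((δ+1+(k:ℝ)) * Real.Gamma (δ+1+(k:ℝ)) * (((k:ℝ)+1) * (k.factorial : ℝ))) := by
        gcongr
    _ = (|σ| + (δ+1))/(δ+1) * |x| / ((k:ℝ)+1) *
        (|∏ m ∈ Finset.range k, (σ+(m:ℝ))| * |x|^k / (Real.Gamma (δ+1+(k:ℝ)) * (k.factorial : ℝ))) := by
        field_simp


lemma rep (μ δ x : ℝ) (hμ : 0 < μ + 1) (hδ1 : 0 < δ + 1) (hσ : 0 < μ + δ + 1) :
    lagL μ δ (-x) = Real.exp (-x) / Real.Gamma (μ+1) *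
      ∑' k : ℕ, gc (μ+δ+1) (δ+1) k * x^k := by
  unfold lagL
  have hterm : ∀ k : ℕ, (∏ j ∈ Finset.range k, ((j:ℝ) - μ)) * (-x)^k /
      (Real.Gamma (δ+1+k) * (k.factorial : ℝ))
      = (∏ j ∈ Finset.range k, (μ - j)) * x^k / (Real.Gamma (δ+1+k) * (k.factorial : ℝ)) := by
    intro k
    congr 1
    have h1 : (∏ j ∈ Finset.range k, ((j:ℝ) - μ)) = (-1:ℝ)^k * ∏ j ∈ Finset.range k, (μ - j) := by
      calc (∏ j ∈ Finset.range k, ((j:ℝ) - μ))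
          = ∏ j ∈ Finset.range k, ((-1:ℝ) * (μ - j)) := by
            apply Finset.prod_congr rfl; intro j _; ring
        _ = (∏ _j ∈ Finset.range k, (-1:ℝ)) * ∏ j ∈ Finset.range k, (μ - j) :=
            Finset.prod_mul_distrib
        _ = (-1:ℝ)^k * ∏ j ∈ Finset.range k, (μ - j) := by
            rw [Finset.prod_const, Finset.card_range]
    have h2 : (-1:ℝ)^k * (-1:ℝ)^k = 1 := by rw [← mul_pow]; norm_num
    rw [h1, neg_pow x k]
    calc (-1:ℝ)^k * (∏ j ∈ Finset.range k, (μ - j)) * ((-1:ℝ)^k * x^k)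
        = ((-1:ℝ)^k * (-1:ℝ)^k) * ((∏ j ∈ Finset.range k, (μ - j)) * x^k) := by ring
      _ = (∏ j ∈ Finset.range k, (μ - j)) * x^k := by rw [h2]; ring
  rw [tsum_congr hterm]
  have hgcterm : ∀ k : ℕ, gc (μ+δ+1) (δ+1) k * x^k =
      Real.Gamma (μ+δ+1) * ((∏ m ∈ Finset.range k, (μ+δ+1+m)) * x^k /
        (Real.Gamma (δ+1+k) * (k.factorial : ℝ))) := by
    intro k
    unfold gc
    rw [gamma_prod (μ+δ+1) hσ k]
    have hd : δ + 1 + (k:ℝ) = (δ+1) + (k:ℝ) := by ring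
    rw [hd]
    ring
  rw [tsum_congr hgcterm, tsum_mul_left]
  have hexp : Real.exp (-x) = ∑' m : ℕ, (-x)^m / (m.factorial : ℝ) := by
    rw [Real.exp_eq_exp_ℝ, NormedSpace.exp_eq_tsum_div]
  have hnorm1 : Summable (fun m : ℕ => ‖(-x)^m / (m.factorial : ℝ)‖) := by
    have := summable_facpow x
    apply this.congr; intro m; rw [Real.norm_eq_abs]
  have hnorm2 : Summable (fun k : ℕ => ‖(∏ m ∈ Finset.range k, (μ+δ+1+m)) * x^k /
      (Real.Gamma (δ+1+k) * (k.factorial : ℝ))‖) := by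
    have := summable_poch_abs (μ+δ+1) δ x hδ1
    apply this.congr; intro m; rw [Real.norm_eq_abs]
  have hC := tsum_mul_tsum_eq_tsum_sum_antidiagonal_of_summable_norm hnorm1 hnorm2
  have heq : (∑' m : ℕ, (-x)^m / (m.factorial : ℝ)) *
      (∑' k : ℕ, (∏ m ∈ Finset.range k, (μ+δ+1+m)) * x^k /
        (Real.Gamma (δ+1+k) * (k.factorial : ℝ)))
      = ∑' k : ℕ, (∏ j ∈ Finset.range k, (μ - j)) * x^k /
        (Real.Gamma (δ+1+k) * (k.factorial : ℝ)) := by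
    rw [hC]
    exact tsum_congr (coeff_identity μ δ x hδ1)
  rw [hexp, ← heq]
  ring


section PQ

variable {α ν : ℝ}

lemma hc' (hα : 0 < α) (hν : -1 < ν) : 0 < ν + α + 1 := by linarith
lemma hd1' (hα : 0 < α) : 0 < α + 1 := by linarith

/-- coefficient identity: k * p_k = q_k - α p_k -/
lemma coeffPQ (hα : 0 < α) (hν : -1 < ν) (k : ℕ) :
    (k:ℝ) * gc (ν+α+1) (α+1) k = gc (ν+α+1) α k - α * gc (ν+α+1) (α+1) k := by
  unfold gc
  have hak : (0:ℝ) < α + k := by positivity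
  have hg1 : Real.Gamma (α+1+(k:ℝ)) = (α+(k:ℝ)) * Real.Gamma (α+(k:ℝ)) := by
    rw [show α+1+(k:ℝ) = (α+(k:ℝ))+1 by ring]
    exact Real.Gamma_add_one (ne_of_gt hak)
  have hgak : (0:ℝ) < Real.Gamma (α+(k:ℝ)) := Real.Gamma_pos_of_pos hak
  have hfk : (0:ℝ) < (k.factorial : ℝ) := by exact_mod_cast k.factorial_pos
  rw [hg1]
  field_simp
  ring

/-- coefficient identity: (k+1) * q_{k+1} = q_k + (ν+1) p_k -/
lemma coeffQ (hα : 0 < α) (hν : -1 < ν) (k : ℕ) :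
    (((k:ℝ))+1) * gc (ν+α+1) α (k+1) = gc (ν+α+1) α k + (ν+1) * gc (ν+α+1) (α+1) k := by
  unfold gc
  have hak : (0:ℝ) < α + k := by positivity
  have hck : (0:ℝ) < ν+α+1+(k:ℝ) := by linarith [Nat.cast_nonneg (α := ℝ) k]
  have hg1 : Real.Gamma (ν+α+1+((k+1:ℕ):ℝ)) = (ν+α+1+(k:ℝ)) * Real.Gamma (ν+α+1+(k:ℝ)) := by
    rw [show ν+α+1+((k+1:ℕ):ℝ) = (ν+α+1+(k:ℝ))+1 by push_cast; ring]
    exact Real.Gamma_add_one (ne_of_gt hck)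
  have hg2 : Real.Gamma (α+((k+1:ℕ):ℝ)) = (α+(k:ℝ)) * Real.Gamma (α+(k:ℝ)) := by
    rw [show α+((k+1:ℕ):ℝ) = (α+(k:ℝ))+1 by push_cast; ring]
    exact Real.Gamma_add_one (ne_of_gt hak)
  have hg3 : Real.Gamma (α+1+(k:ℝ)) = (α+(k:ℝ)) * Real.Gamma (α+(k:ℝ)) := by
    rw [show α+1+(k:ℝ) = (α+(k:ℝ))+1 by ring]
    exact Real.Gamma_add_one (ne_of_gt hak)
  have hgak : (0:ℝ) < Real.Gamma (α+(k:ℝ)) := Real.Gamma_pos_of_pos hak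
  have hfk : (0:ℝ) < (k.factorial : ℝ) := by exact_mod_cast k.factorial_pos
  have hfact : ((k+1 : ℕ).factorial : ℝ) = ((k:ℝ)+1) * (k.factorial : ℝ) := by
    rw [Nat.factorial_succ]; push_cast; ring
  rw [hg1, hg2, hg3, hfact]
  have hk1 : (0:ℝ) < (k:ℝ)+1 := by positivity
  field_simp
  ring

lemma pf_term_pos (hα : 0 < α) (hν : -1 < ν) {t : ℝ} (ht : 0 ≤ t) (k : ℕ) :
    0 ≤ gc (ν+α+1) (α+1) k * t^k :=
  mul_nonneg (gc_pos (hc' hα hν) (hd1' hα) k).le (pow_nonneg ht k)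

lemma Pf_pos (hα : 0 < α) (hν : -1 < ν) {t : ℝ} (ht : 0 ≤ t) :
    0 < ∑' k, gc (ν+α+1) (α+1) k * t^k := by
  apply Summable.tsum_pos (summable_gc_pow (hc' hα hν) (hd1' hα) t) (pf_term_pos hα hν ht) 0
  simp only [pow_zero, mul_one]
  exact gc_pos (hc' hα hν) (hd1' hα) 0

lemma Qf_pos (hα : 0 < α) (hν : -1 < ν) {t : ℝ} (ht : 0 ≤ t) :
    0 < ∑' k, gc (ν+α+1) α k * t^k := by
  apply Summable.tsum_pos (summable_gc_pow (hc' hα hν) hα t)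
    (fun k => mul_nonneg (gc_pos (hc' hα hν) hα k).le (pow_nonneg ht k)) 0
  simp only [pow_zero, mul_one]
  exact gc_pos (hc' hα hν) hα 0

/-- t * P' t = Q t - α * P t -/
lemma identity1 (hα : 0 < α) (hν : -1 < ν) (t : ℝ) :
    t * ∑' k, gc (ν+α+1) (α+1) k * ((k:ℝ) * t^(k-1))
      = (∑' k, gc (ν+α+1) α k * t^k) - α * ∑' k, gc (ν+α+1) (α+1) k * t^k := by
  rw [← tsum_mul_left]
  have hpt : ∀ k : ℕ, t * (gc (ν+α+1) (α+1) k * ((k:ℝ) * t^(k-1)))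
      = gc (ν+α+1) α k * t^k - α * (gc (ν+α+1) (α+1) k * t^k) := by
    intro k
    have h1 : t * (gc (ν+α+1) (α+1) k * ((k:ℝ) * t^(k-1)))
        = ((k:ℝ) * gc (ν+α+1) (α+1) k) * t^k := by
      cases k with
      | zero => simp
      | succ n =>
          have : t^(n+1-1) * t = t^(n+1) := by
            rw [Nat.add_sub_cancel, pow_succ]
          calc t * (gc (ν+α+1) (α+1) (n+1) * ((((n+1:ℕ)):ℝ) * t^(n+1-1)))
              = (((n+1:ℕ)):ℝ) * gc (ν+α+1) (α+1) (n+1) * (t^(n+1-1) * t) := by ring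
            _ = (((n+1:ℕ)):ℝ) * gc (ν+α+1) (α+1) (n+1) * t^(n+1) := by rw [this]
    rw [h1, coeffPQ hα hν k]
    ring
  rw [tsum_congr hpt]
  rw [Summable.tsum_sub (summable_gc_pow (hc' hα hν) hα t)
    ((summable_gc_pow (hc' hα hν) (hd1' hα) t).mul_left α), tsum_mul_left]

/-- Q' t = Q t + (ν+1) * P t -/
lemma identity2 (hα : 0 < α) (hν : -1 < ν) (t : ℝ) :
    (∑' k, gc (ν+α+1) α k * ((k:ℝ) * t^(k-1)))
      = (∑' k, gc (ν+α+1) α k * t^k) + (ν+1) * ∑' k, gc (ν+α+1) (α+1) k * t^k := by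
  rw [Summable.tsum_eq_zero_add (summable_gc_deriv (hc' hα hν) hα t)]
  simp only [Nat.cast_zero, zero_mul, mul_zero, zero_add]
  have hpt : ∀ k : ℕ, gc (ν+α+1) α (k+1) * ((((k+1:ℕ)):ℝ) * t^((k+1)-1))
      = gc (ν+α+1) α k * t^k + (ν+1) * (gc (ν+α+1) (α+1) k * t^k) := by
    intro k
    have h1 : gc (ν+α+1) α (k+1) * ((((k+1:ℕ)):ℝ) * t^((k+1)-1))
        = ((((k:ℝ))+1) * gc (ν+α+1) α (k+1)) * t^k := by
      rw [Nat.add_sub_cancel]; push_cast; ring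
    rw [h1, coeffQ hα hν k]
    ring
  rw [tsum_congr hpt]
  rw [Summable.tsum_add (summable_gc_pow (hc' hα hν) hα t)
    ((summable_gc_pow (hc' hα hν) (hd1' hα) t).mul_left (ν+1)), tsum_mul_left]

end PQ

noncomputable def Pfun (α ν x : ℝ) : ℝ := ∑' k, gc (ν+α+1) (α+1) k * x^k
noncomputable def Qfun (α ν x : ℝ) : ℝ := ∑' k, gc (ν+α+1) α k * x^k
noncomputable def DPfun (α ν t : ℝ) : ℝ := ∑' k, gc (ν+α+1) (α+1) k * ((k:ℝ) * t^(k-1))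
noncomputable def DQfun (α ν t : ℝ) : ℝ := ∑' k, gc (ν+α+1) α k * ((k:ℝ) * t^(k-1))
noncomputable def gam (α ν t : ℝ) : ℝ :=
  (α + t + Real.sqrt ((α+t)^2 + 4*(ν+1)*t))/2
noncomputable def gamD (α ν t : ℝ) : ℝ :=
  (1 + (2*(α+t) + 4*(ν+1)) / (2*Real.sqrt ((α+t)^2 + 4*(ν+1)*t)))/2
noncomputable def Hfun (α ν t : ℝ) : ℝ := gam α ν t * Pfun α ν t - Qfun α ν t

section Gam

variable {α ν : ℝ}

lemma Dpos (hα : 0 < α) (hν : -1 < ν) {t : ℝ} (ht : 0 ≤ t) :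
    0 < (α+t)^2 + 4*(ν+1)*t := by nlinarith

lemma hasDerivAt_gam (hα : 0 < α) (hν : -1 < ν) {t : ℝ} (ht : 0 ≤ t) :
    HasDerivAt (gam α ν) (gamD α ν t) t := by
  have hD := Dpos hα hν ht
  have ha : HasDerivAt (fun y : ℝ => α + y) 1 t := (hasDerivAt_id t).const_add α
  have hb : HasDerivAt (fun y : ℝ => (α+y)^2 + 4*(ν+1)*y) (2*(α+t) + 4*(ν+1)) t := by
    have h1 := (ha.pow 2).add ((hasDerivAt_id t).const_mul (4*(ν+1)))
    refine h1.congr_deriv ?_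
    norm_num
  have hs : HasDerivAt (fun y : ℝ => Real.sqrt ((α+y)^2 + 4*(ν+1)*y))
      (1 / (2 * Real.sqrt ((α+t)^2 + 4*(ν+1)*t)) * (2*(α+t) + 4*(ν+1))) t :=
    (Real.hasDerivAt_sqrt (ne_of_gt hD)).comp t hb
  have hfinal := (ha.add hs).div_const 2
  refine hfinal.congr_deriv ?_
  unfold gamD
  ring

lemma gamD_pos (hα : 0 < α) (hν : -1 < ν) {t : ℝ} (ht : 0 ≤ t) :
    0 < gamD α ν t := by
  have hD := Dpos hα hν ht
  have hs : 0 < Real.sqrt ((α+t)^2 + 4*(ν+1)*t) := Real.sqrt_pos.mpr hD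
  unfold gamD
  have h1 : 0 < (2*(α+t) + 4*(ν+1)) / (2*Real.sqrt ((α+t)^2 + 4*(ν+1)*t)) := by
    apply div_pos (by nlinarith) (by linarith)
  linarith

lemma gam_pos (hα : 0 < α) (hν : -1 < ν) {t : ℝ} (ht : 0 ≤ t) :
    0 < gam α ν t := by
  have hs : 0 ≤ Real.sqrt ((α+t)^2 + 4*(ν+1)*t) := Real.sqrt_nonneg _
  unfold gam
  linarith

lemma gam_eq (hα : 0 < α) (hν : -1 < ν) {t : ℝ} (ht : 0 ≤ t) :
    (gam α ν t)^2 = (α+t) * gam α ν t + (ν+1)*t := by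
  have hD := Dpos hα hν ht
  have hs : Real.sqrt ((α+t)^2 + 4*(ν+1)*t)^2 = (α+t)^2 + 4*(ν+1)*t :=
    Real.sq_sqrt hD.le
  unfold gam
  nlinarith [hs]

lemma gam_zero (hα : 0 < α) : gam α ν 0 = α := by
  unfold gam
  rw [show (α+0)^2 + 4*(ν+1)*0 = α^2 by ring, Real.sqrt_sq hα.le]
  ring

lemma gamD_zero (hα : 0 < α) : gamD α ν 0 = (1 + (2*α + 4*(ν+1))/(2*α))/2 := by
  unfold gamD
  rw [show (α+0)^2 + 4*(ν+1)*0 = α^2 by ring, Real.sqrt_sq hα.le]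
  ring_nf

end Gam

section HH

variable {α ν : ℝ}

lemma hasDerivAt_H (hα : 0 < α) (hν : -1 < ν) {t : ℝ} (ht : 0 ≤ t) :
    HasDerivAt (Hfun α ν)
      (gamD α ν t * Pfun α ν t + gam α ν t * DPfun α ν t - DQfun α ν t) t := by
  have hP : HasDerivAt (Pfun α ν) (DPfun α ν t) t :=
    hasDerivAt_gc_sum (hc' hα hν) (hd1' hα) t
  have hQ : HasDerivAt (Qfun α ν) (DQfun α ν t) t :=
    hasDerivAt_gc_sum (hc' hα hν) hα t
  exact ((hasDerivAt_gam hα hν ht).mul hP).sub hQ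

lemma Pfun_zero (hα : 0 < α) (hν : -1 < ν) :
    Pfun α ν 0 = Real.Gamma (ν+α+1) / Real.Gamma (α+1) := by
  unfold Pfun
  rw [tsum_eq_single 0 (fun k hk => by rw [zero_pow hk, mul_zero])]
  unfold gc
  norm_num

lemma Qfun_zero (hα : 0 < α) (hν : -1 < ν) :
    Qfun α ν 0 = Real.Gamma (ν+α+1) / Real.Gamma α := by
  unfold Qfun
  rw [tsum_eq_single 0 (fun k hk => by rw [zero_pow hk, mul_zero])]
  unfold gc
  norm_num

lemma DPfun_zero (hα : 0 < α) (hν : -1 < ν) :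
    DPfun α ν 0 = Real.Gamma (ν+α+2) / Real.Gamma (α+2) := by
  unfold DPfun
  rw [tsum_eq_single 1 ?_]
  · unfold gc
    norm_num
    rw [show ν+α+1+1 = ν+α+2 by ring, show α+1+1 = α+2 by ring]
  · intro k hk
    match k, hk with
    | 0, _ => norm_num
    | (n+2), _ =>
        have : (0:ℝ)^(n+2-1) = 0 := by
          rw [zero_pow]; omega
        rw [this, mul_zero, mul_zero]

lemma Hfun_zero (hα : 0 < α) (hν : -1 < ν) : Hfun α ν 0 = 0 := by
  unfold Hfun
  rw [Pfun_zero hα hν, Qfun_zero hα hν, gam_zero hα]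
  have hga : Real.Gamma (α+1) = α * Real.Gamma α := Real.Gamma_add_one (ne_of_gt hα)
  have h1 : Real.Gamma α ≠ 0 := ne_of_gt (Real.Gamma_pos_of_pos hα)
  rw [hga]
  field_simp
  ring

lemma Hderiv0_pos (hα : 0 < α) (hν : -1 < ν) :
    0 < gamD α ν 0 * Pfun α ν 0 + gam α ν 0 * DPfun α ν 0 - DQfun α ν 0 := by
  have hDQ : DQfun α ν 0 = Qfun α ν 0 + (ν+1) * Pfun α ν 0 := identity2 hα hν 0
  rw [hDQ, Pfun_zero hα hν, Qfun_zero hα hν, DPfun_zero hα hν, gam_zero hα, gamD_zero hα]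
  have hga : Real.Gamma (α+1) = α * Real.Gamma α := Real.Gamma_add_one (ne_of_gt hα)
  have hga2 : Real.Gamma (α+2) = (α+1) * Real.Gamma (α+1) := by
    rw [show α+2 = (α+1)+1 by ring]
    exact Real.Gamma_add_one (by positivity)
  have hgc2 : Real.Gamma (ν+α+2) = (ν+α+1) * Real.Gamma (ν+α+1) := by
    rw [show ν+α+2 = (ν+α+1)+1 by ring]
    exact Real.Gamma_add_one (ne_of_gt (hc' hα hν))
  have h1 : 0 < Real.Gamma α := Real.Gamma_pos_of_pos hα
  have h2 : 0 < Real.Gamma (ν+α+1) := Real.Gamma_pos_of_pos (hc' hα hν)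
  rw [hga2, hga, hgc2]
  have key : (1 + (2*α + 4*(ν+1))/(2*α))/2 * (Real.Gamma (ν+α+1) / (α * Real.Gamma α))
      + α * ((ν+α+1) * Real.Gamma (ν+α+1) / ((α+1) * (α * Real.Gamma α)))
      - (Real.Gamma (ν+α+1) / Real.Gamma α
        + (ν+1) * (Real.Gamma (ν+α+1) / (α * Real.Gamma α)))
      = Real.Gamma (ν+α+1) * (ν+α+1) / (α^2 * (α+1) * Real.Gamma α) := by
    field_simp
    ring
  rw [key]
  have h3 : 0 < ν+α+1 := hc' hα hν
  positivity

lemma H_pos (hα : 0 < α) (hν : -1 < ν) {x : ℝ} (hx : 0 < x) : 0 < Hfun α ν x := by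
  by_contra hcon
  push_neg at hcon
  -- continuity of H
  have hPcont : Continuous (Pfun α ν) := continuous_iff_continuousAt.mpr
    (fun t => (hasDerivAt_gc_sum (hc' hα hν) (hd1' hα) t).continuousAt)
  have hQcont : Continuous (Qfun α ν) := continuous_iff_continuousAt.mpr
    (fun t => (hasDerivAt_gc_sum (hc' hα hν) hα t).continuousAt)
  have hgamcont : Continuous (gam α ν) := by
    unfold gam
    fun_prop
  have hHcont : Continuous (Hfun α ν) := ((hgamcont.mul hPcont).sub hQcont)
  -- positivity just to the right of 0
  have hd0 : HasDerivAt (Hfun α ν)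
      (gamD α ν 0 * Pfun α ν 0 + gam α ν 0 * DPfun α ν 0 - DQfun α ν 0) 0 :=
    hasDerivAt_H hα hν le_rfl
  have hd0pos := Hderiv0_pos hα hν
  have hslope0 : Filter.Tendsto (slope (Hfun α ν) 0) (nhdsWithin 0 {y : ℝ | 0 < y})
      (nhds (gamD α ν 0 * Pfun α ν 0 + gam α ν 0 * DPfun α ν 0 - DQfun α ν 0)) := by
    apply (hasDerivAt_iff_tendsto_slope.mp hd0).mono_left
    apply nhdsWithin_mono
    intro y hy
    exact ne_of_gt hy
  have hev : ∀ᶠ t in nhdsWithin (0:ℝ) {y : ℝ | 0 < y}, 0 < slope (Hfun α ν) 0 t :=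
    hslope0.eventually (eventually_gt_nhds hd0pos)
  rw [show {y : ℝ | 0 < y} = Set.Ioi (0:ℝ) from rfl] at hev
  rw [Filter.eventually_iff, mem_nhdsGT_iff_exists_Ioo_subset] at hev
  obtain ⟨δ, hδ, hsub⟩ := hev
  have hδpos : 0 < δ := hδ
  have hnear : ∀ t : ℝ, 0 < t → t < δ → 0 < Hfun α ν t := by
    intro t ht htδ
    have hsl : 0 < slope (Hfun α ν) 0 t := hsub ⟨ht, htδ⟩
    rw [slope_def_field, Hfun_zero hα hν, sub_zero, sub_zero] at hsl
    have := mul_pos hsl ht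
    rw [div_mul_cancel₀ _ (ne_of_gt ht)] at this
    exact this
  -- the first-zero argument
  set δ' := min (δ/2) x with hδ'
  have hδ'pos : 0 < δ' := lt_min (by linarith) hx
  have hδ'x : δ' ≤ x := min_le_right _ _
  have hδ'δ : δ' < δ := lt_of_le_of_lt (min_le_left _ _) (by linarith)
  set S := {t : ℝ | t ∈ Set.Icc δ' x ∧ Hfun α ν t ≤ 0} with hS
  have hSclosed : IsClosed S := by
    apply IsClosed.inter isClosed_Icc
    exact isClosed_le hHcont continuous_const
  have hSx : x ∈ S := ⟨⟨hδ'x, le_rfl⟩, hcon⟩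
  have hSbdd : BddBelow S := ⟨δ', fun t ht => ht.1.1⟩
  set x₀ := sInf S with hx₀
  have hx₀S : x₀ ∈ S := hSclosed.csInf_mem ⟨x, hSx⟩ hSbdd
  have hx₀pos : 0 < x₀ := lt_of_lt_of_le hδ'pos hx₀S.1.1
  have hkey : ∀ t : ℝ, 0 < t → t < x₀ → 0 < Hfun α ν t := by
    intro t ht htx
    by_cases hcase : t < δ'
    · exact hnear t ht (lt_trans hcase hδ'δ)
    · push_neg at hcase
      by_contra hneg
      push_neg at hneg
      have : t ∈ S := ⟨⟨hcase, le_trans htx.le hx₀S.1.2⟩, hneg⟩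
      exact absurd (csInf_le hSbdd this) (not_le.mpr htx)
  have hx₀zero : Hfun α ν x₀ = 0 := by
    apply le_antisymm hx₀S.2
    have htd : Filter.Tendsto (Hfun α ν) (nhdsWithin x₀ (Set.Iio x₀))
        (nhds (Hfun α ν x₀)) := (hHcont.tendsto x₀).mono_left nhdsWithin_le_nhds
    apply ge_of_tendsto htd
    filter_upwards [Ioo_mem_nhdsLT_of_mem (⟨hx₀pos, le_refl x₀⟩ : x₀ ∈ Set.Ioc 0 x₀)]
      with t ht
    exact (hkey t ht.1 ht.2).le
  -- derivative at x₀
  have hder := hasDerivAt_H hα hν hx₀pos.le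
  have hQeq : Qfun α ν x₀ = gam α ν x₀ * Pfun α ν x₀ := by
    have : gam α ν x₀ * Pfun α ν x₀ - Qfun α ν x₀ = 0 := hx₀zero
    linarith
  have hzero2 : gam α ν x₀ * DPfun α ν x₀ - DQfun α ν x₀ = 0 := by
    have hi1 : x₀ * DPfun α ν x₀ = Qfun α ν x₀ - α * Pfun α ν x₀ := identity1 hα hν x₀
    have hi2 : DQfun α ν x₀ = Qfun α ν x₀ + (ν+1) * Pfun α ν x₀ := identity2 hα hν x₀
    have hge := gam_eq hα hν hx₀pos.le
    have hz : x₀ * (gam α ν x₀ * DPfun α ν x₀ - DQfun α ν x₀) = 0 := by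
      have expand : x₀ * (gam α ν x₀ * DPfun α ν x₀ - DQfun α ν x₀)
          = gam α ν x₀ * (x₀ * DPfun α ν x₀) - x₀ * DQfun α ν x₀ := by ring
      rw [expand, hi1, hi2, hQeq]
      linear_combination Pfun α ν x₀ * hge
    rcases mul_eq_zero.mp hz with h | h
    · exact absurd h (ne_of_gt hx₀pos)
    · exact h
  have hdval : gamD α ν x₀ * Pfun α ν x₀ + gam α ν x₀ * DPfun α ν x₀ - DQfun α ν x₀
      = gamD α ν x₀ * Pfun α ν x₀ := by linarith
  rw [hdval] at hder
  have hdpos : 0 < gamD α ν x₀ * Pfun α ν x₀ :=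
    mul_pos (gamD_pos hα hν hx₀pos.le) (Pf_pos hα hν hx₀pos.le)
  -- left slope nonpositive: contradiction
  have hslope2 : Filter.Tendsto (slope (Hfun α ν) x₀) (nhdsWithin x₀ (Set.Iio x₀))
      (nhds (gamD α ν x₀ * Pfun α ν x₀)) := by
    apply (hasDerivAt_iff_tendsto_slope.mp hder).mono_left
    apply nhdsWithin_mono
    intro y hy
    exact ne_of_lt hy
  have hevle : ∀ᶠ t in nhdsWithin x₀ (Set.Iio x₀), slope (Hfun α ν) x₀ t ≤ 0 := by
    filter_upwards [Ioo_mem_nhdsLT_of_mem (⟨hx₀pos, le_refl x₀⟩ : x₀ ∈ Set.Ioc 0 x₀)]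
      with t ht
    rw [slope_def_field, hx₀zero, sub_zero]
    apply div_nonpos_of_nonneg_of_nonpos (hkey t ht.1 ht.2).le
    linarith [ht.2]
  have : gamD α ν x₀ * Pfun α ν x₀ ≤ 0 := le_of_tendsto hslope2 hevle
  linarith

end HH

end LagAux

open LagAux in
/-- For `α > 0`, `ν > -1` and `x > 0`:
`0 < L_{ν+1}^{α-1}(-x)/L_ν^{α}(-x) < (α + x + √((α+x)² + 4(ν+1)x))/(2(ν+1))`. -/
theorem laguerre_neg_arg_ratio_upper (α ν x : ℝ) (hα : 0 < α) (hν : -1 < ν)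
    (hx : 0 < x) :
    0 < lagL (ν + 1) (α - 1) (-x) / lagL ν α (-x) ∧
    lagL (ν + 1) (α - 1) (-x) / lagL ν α (-x) <
      (α + x + Real.sqrt ((α + x) ^ 2 + 4 * (ν + 1) * x)) / (2 * (ν + 1)) := by
  have hc : 0 < ν + α + 1 := by linarith
  have hν1 : (0:ℝ) < ν + 1 := by linarith
  have hrep1 : lagL ν α (-x) = Real.exp (-x) / Real.Gamma (ν+1) * Pfun α ν x := by
    have h := rep ν α x (by linarith) (by linarith) hc
    exact h
  have hrep2 : lagL (ν+1) (α-1) (-x) = Real.exp (-x) / Real.Gamma (ν+2) * Qfun α ν x := by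
    have h := rep (ν+1) (α-1) x (by linarith) (by linarith) (by linarith)
    rw [show (ν+1)+(α-1)+1 = ν+α+1 by ring, show (α-1)+1 = α by ring,
      show (ν+1)+1 = ν+2 by ring] at h
    exact h
  have hP : 0 < Pfun α ν x := Pf_pos hα hν hx.le
  have hQ : 0 < Qfun α ν x := Qf_pos hα hν hx.le
  have hG1 : 0 < Real.Gamma (ν+1) := Real.Gamma_pos_of_pos hν1
  have hG2 : Real.Gamma (ν+2) = (ν+1) * Real.Gamma (ν+1) := by
    rw [show ν+2 = (ν+1)+1 by ring]
    exact Real.Gamma_add_one (ne_of_gt hν1)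
  have hE : 0 < Real.exp (-x) := Real.exp_pos _
  have hEG : 0 < Real.exp (-x) / Real.Gamma (ν+1) := div_pos hE hG1
  constructor
  · rw [hrep1, hrep2, hG2]
    apply div_pos
    · apply mul_pos (div_pos hE (by positivity)) hQ
    · exact mul_pos hEG hP
  · have hkey : Qfun α ν x < gam α ν x * Pfun α ν x := by
      have h := H_pos hα hν hx
      unfold Hfun at h
      linarith
    have hrhs : (α + x + Real.sqrt ((α + x) ^ 2 + 4 * (ν + 1) * x)) / (2 * (ν + 1))
        = gam α ν x / (ν+1) := by
      unfold gam
      rw [div_div]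
    rw [hrep1, hrep2, hG2, hrhs]
    rw [div_lt_div_iff₀ (mul_pos hEG hP) hν1]
    have h1 : Real.exp (-x) / ((ν+1) * Real.Gamma (ν+1)) * Qfun α ν x * (ν+1)
        = Real.exp (-x) / Real.Gamma (ν+1) * Qfun α ν x := by
      field_simp
    rw [h1]
    calc Real.exp (-x) / Real.Gamma (ν+1) * Qfun α ν x
        < Real.exp (-x) / Real.Gamma (ν+1) * (gam α ν x * Pfun α ν x) :=
          mul_lt_mul_of_pos_left hkey hEG
      _ = gam α ν x * (Real.exp (-x) / Real.Gamma (ν+1) * Pfun α ν x) := by ring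
end
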